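/- The paperfolding sequence is the limit of the finite words p_0 = 0, p_{i+1} = p_i · 0 · reverse(complement(p_i)): for every i, the word p_i is a prefix of p_{i+1}, and the first 2^{i+1} − 1 letters of the paperfolding sequence agree with p_i. -/

import Mathlib

/-- The regular paperfolding sequence: `p n = m % 2` where
`n + 1 = 2 ^ k * (2 * m + 1)`. -/
def paperfolding (n : ℕ) : ℕ :=
  (((n + 1) / 2 ^ ((n + 1).factorization 2) - 1) / 2) % 2

/-- The finite paperfolding words: `p_0 = 0`,
`p_{i+1} = p_i · 0 · reverse (complement p_i)`. -/
def pfWord : ℕ → List ℕ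
  | 0 => [0]
  | i + 1 => pfWord i ++ [0] ++ ((pfWord i).map (fun b => 1 - b)).reverse



lemma pf_even (t : ℕ) : paperfolding (2 * t) = t % 2 := by
  unfold paperfolding
  have h : (2 * t + 1).factorization 2 = 0 :=
    Nat.factorization_eq_zero_of_not_dvd (by omega)
  rw [h]
  simp

lemma pf_odd (t : ℕ) : paperfolding (2 * t + 1) = paperfolding t := by
  unfold paperfolding
  have h : (2 * t + 1 + 1) = 2 * (t + 1) := by ring
  rw [h, Nat.factorization_mul (by norm_num) (by omega)]
  have h2 : (2 : ℕ).factorization 2 = 1 := Nat.Prime.factorization_self (by norm_num)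
  simp only [Finsupp.coe_add, Pi.add_apply, h2, pow_add, pow_one]
  rw [Nat.mul_div_mul_left _ _ (by norm_num : (0:ℕ) < 2)]

lemma pf_le (n : ℕ) : paperfolding n ≤ 1 := Nat.le_of_lt_succ (Nat.mod_lt _ (by norm_num))

lemma pf_anti : ∀ K a b : ℕ, a + b + 2 = 2 ^ K → a ≠ b → paperfolding b = 1 - paperfolding a := by
  intro K
  induction K with
  | zero => intro a b h _; omega
  | succ K ih =>
    intro a b h hne
    match K, h with
    | 0, h => omega
    | K + 1, h =>
      rcases Nat.even_or_odd a with ⟨s, rfl⟩ | ⟨s, rfl⟩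
      · -- a even, so b even
        have hb : ∃ t, b = 2 * t := by
          refine ⟨b / 2, ?_⟩
          have : 2 ^ (K + 2) % 2 = 0 := by
            rw [pow_succ]; omega
          omega
        obtain ⟨t, rfl⟩ := hb
        rw [show s + s = 2 * s by ring, pf_even, pf_even]
        have hst : s + t + 1 = 2 ^ (K + 1) := by
          rw [pow_succ] at h; omega
        have : 2 ^ (K + 1) % 2 = 0 := by rw [pow_succ]; omega
        omega
      · -- a odd, so b odd
        have hb : ∃ t, b = 2 * t + 1 := by
          refine ⟨b / 2, ?_⟩
          have : 2 ^ (K + 2) % 2 = 0 := by rw [pow_succ]; omega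
          omega
        obtain ⟨t, rfl⟩ := hb
        rw [pf_odd, pf_odd]
        apply ih
        · rw [pow_succ] at h; omega
        · omega

lemma pf_pow (K : ℕ) : paperfolding (2 ^ (K + 1) - 1) = 0 := by
  unfold paperfolding
  have h1 : (1:ℕ) ≤ 2 ^ (K+1) := Nat.one_le_two_pow
  rw [show 2 ^ (K+1) - 1 + 1 = 2 ^ (K+1) by omega]
  rw [Nat.Prime.factorization_pow Nat.prime_two]
  simp



lemma pf_len (j : ℕ) : (pfWord j).length = 2 ^ (j + 1) - 1 := by
  induction j with
  | zero => rfl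
  | succ j ih =>
    have h1 : (1:ℕ) ≤ 2 ^ (j+1) := Nat.one_le_two_pow
    simp [pfWord, ih, pow_succ]
    omega

lemma pf_getD : ∀ i n, n < 2 ^ (i + 1) - 1 → (pfWord i).getD n 0 = paperfolding n := by
  intro i
  induction i with
  | zero =>
    intro n hn
    interval_cases n
    have := pf_even 0
    simpa [pfWord] using this.symm
  | succ i ih =>
    intro n hn
    have h1 : (1:ℕ) ≤ 2 ^ (i+1) := Nat.one_le_two_pow
    set L := 2 ^ (i+1) - 1 with hL
    have hlen : (pfWord i).length = L := pf_len i
    have hlen2 : ((pfWord i).map (fun b => 1 - b)).reverse.length = L := by simp [hlen]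
    have hn' : n < 2 * L + 1 := by
      have : 2 ^ (i+2) = 2 * 2 ^ (i+1) := by ring
      omega
    show (pfWord i ++ [0] ++ ((pfWord i).map (fun b => 1 - b)).reverse).getD n 0 = _
    rcases lt_trichotomy n L with h | h | h
    · rw [List.getD_append _ _ _ _ (by simp [hlen]; omega)]
      rw [List.getD_append _ _ _ _ (by omega)]
      exact ih n (by omega)
    · subst h
      rw [List.getD_append _ _ _ _ (by simp [hlen])]
      rw [List.getD_append_right _ _ _ _ (by simp [hlen])]
      rw [hlen, Nat.sub_self]
      have := pf_pow i
      simpa using this.symm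
    · rw [List.getD_append_right _ _ _ _ (by simp [hlen]; omega)]
      have hj : n - (pfWord i ++ [0]).length = n - L - 1 := by simp [hlen]; omega
      rw [hj]
      set j := n - L - 1 with hjdef
      have hjL : j < L := by omega
      rw [List.getD_eq_getElem _ _ (by omega : j < _)]
      rw [List.getElem_reverse]
      rw [List.getElem_map]
      set m := L - 1 - j with hm
      have hmidx : ((pfWord i).map (fun b => 1 - b)).length - 1 - j = m := by simp [hlen]; exact hm.symm
      have hget : (pfWord i)[((pfWord i).map (fun b => 1 - b)).length - 1 - j]'(by simp [hlen]; omega)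
          = (pfWord i).getD m 0 := by
        rw [List.getD_eq_getElem _ _ (by omega : m < (pfWord i).length)]
        congr 1
      rw [hget, ih m (by omega)]
      have hanti : paperfolding n = 1 - paperfolding m := by
        apply pf_anti (i + 2)
        · have : 2 ^ (i+2) = 2 * 2 ^ (i+1) := by ring
          omega
        · omega
      rw [hanti]


theorem paperfolding_limit_of_pfWords (i : ℕ) :
    pfWord i <+: pfWord (i + 1) ∧
      ∀ n, n < 2 ^ (i + 1) - 1 → (pfWord i).getD n 0 = paperfolding n := by
  exact ⟨⟨[0] ++ ((pfWord i).map (fun b => 1 - b)).reverse, by simp [pfWord]⟩,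
    fun n hn => pf_getD i n hn⟩
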